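/- There exists a constant C > 0 (depending only on G₁, G₂, A and the amalgam G) such that for every finite subset S of G, the number of essential right cosets of the subgroup H = ⟨S⟩ generated by S is at most C·(1 + Σ_{s∈S} ℓ(s)), where ℓ(s) denotes the word length of s with respect to the generating set (ι₁(G₁) ∪ ι₂(G₂)) \ {1} of G. -/

import Mathlib

open Monoid

section EssentialCosets

variable {A : Type} [Group A] {Gf : Bool → Type} [∀ i, Group (Gf i)]
  (φ : ∀ i : Bool, A →* Gf i)

/-- `g` lies in the image `ι_i(G_i)` of the `i`-th factor of the pushout. -/
def InFactor (i : Bool) (g : PushoutI φ) : Prop :=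
  g ∈ (PushoutI.of (φ := φ) i).range

/-- `L = (g₁, …, g_n)` is a normal decomposition of `g ∈ G = G₁ *_A G₂`: it is a nonempty
sequence with product `g`, each entry is a nontrivial element of `ι₁(G₁) ∪ ι₂(G₂)`,
consecutive entries do not lie in the same factor, and if `n > 1` then no entry lies in
`ι_A(A)`. -/
def IsNormalDecomp (g : PushoutI φ) (L : List (PushoutI φ)) : Prop :=
  L ≠ [] ∧ L.prod = g ∧
    (∀ x ∈ L, x ≠ 1 ∧ (InFactor φ true x ∨ InFactor φ false x)) ∧
    (∀ n : ℕ, ∀ x y : PushoutI φ, L[n]? = some x → L[n + 1]? = some y →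
      ¬ (InFactor φ true x ∧ InFactor φ true y) ∧
      ¬ (InFactor φ false x ∧ InFactor φ false y)) ∧
    (1 < L.length → ∀ x ∈ L, x ∉ (PushoutI.base φ).range)

/-- The right coset `H·c` is *essential* if either `H·c = H`, or there is `h ∈ H` with a
normal decomposition `(h₁, …, h_n)`, an index `0 ≤ m < n`, and an element `s` of a factor
`ι_i(G_i)` containing `h_{m+1}`, such that `H·c = H·h₁⋯h_m·s`. -/
def IsEssentialCoset (H : Subgroup (PushoutI φ)) (c : PushoutI φ) : Prop :=
  c ∈ H ∨ ∃ (L : List (PushoutI φ)) (m : ℕ) (s : PushoutI φ),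
    IsNormalDecomp φ L.prod L ∧ L.prod ∈ H ∧ m < L.length ∧
    (∃ (i : Bool) (x : PushoutI φ), L[m]? = some x ∧ InFactor φ i x ∧ InFactor φ i s) ∧
    c * ((L.take m).prod * s)⁻¹ ∈ H

/-- The collection of essential right cosets `H·c` of `H` in `G`, as a set of subsets of `G`. -/
def essentialCosets (H : Subgroup (PushoutI φ)) : Set (Set (PushoutI φ)) :=
  {S | ∃ c : PushoutI φ, IsEssentialCoset φ H c ∧ S = {g : PushoutI φ | g * c⁻¹ ∈ H}}


-- ### Auxiliary development ###

def Alt (x y : PushoutI φ) : Prop :=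
  ¬ (InFactor φ true x ∧ InFactor φ true y) ∧
  ¬ (InFactor φ false x ∧ InFactor φ false y)

lemma consec_iff_chain' (L : List (PushoutI φ)) :
    (∀ n : ℕ, ∀ x y : PushoutI φ, L[n]? = some x → L[n + 1]? = some y →
      ¬ (InFactor φ true x ∧ InFactor φ true y) ∧
      ¬ (InFactor φ false x ∧ InFactor φ false y)) ↔ List.IsChain (Alt φ) L := by
  rw [List.isChain_iff_getElem]
  constructor
  · intro h i hi
    exact h i _ _ (List.getElem?_eq_getElem (by omega)) (List.getElem?_eq_getElem hi)
  · intro h n x y hx hy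
    obtain ⟨hn, rfl⟩ := List.getElem?_eq_some_iff.1 hy
    obtain ⟨_, rfl⟩ := List.getElem?_eq_some_iff.1 hx
    exact h n hn

lemma isNormalDecomp_iff {g : PushoutI φ} {L : List (PushoutI φ)} :
    IsNormalDecomp φ g L ↔ L ≠ [] ∧ L.prod = g ∧
      (∀ x ∈ L, x ≠ 1 ∧ (InFactor φ true x ∨ InFactor φ false x)) ∧
      List.IsChain (Alt φ) L ∧ (1 < L.length → ∀ x ∈ L, x ∉ (PushoutI.base φ).range) := by
  unfold IsNormalDecomp
  rw [consec_iff_chain']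

lemma base_inFactor {x : PushoutI φ} (hx : x ∈ (PushoutI.base φ).range) (i : Bool) :
    InFactor φ i x := by
  obtain ⟨a, rfl⟩ := hx
  exact ⟨φ i a, by rw [PushoutI.of_apply_eq_base]⟩

lemma mem_base_of_both (hφ : ∀ i, Function.Injective (φ i)) {x : PushoutI φ}
    (h1 : InFactor φ true x) (h2 : InFactor φ false x) : x ∈ (PushoutI.base φ).range := by
  have := PushoutI.inf_of_range_eq_base_range hφ (i := true) (j := false) (by simp)
  rw [← this]
  exact ⟨h1, h2⟩

lemma alt_mul_base {u z c : PushoutI φ} (h : Alt φ u z) (hc : c ∈ (PushoutI.base φ).range) :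
    Alt φ u (z * c) := by
  constructor
  · rintro ⟨h1, h2⟩
    refine h.1 ⟨h1, ?_⟩
    have := mul_mem h2 (inv_mem (base_inFactor φ hc true))
    simpa [InFactor] using this
  · rintro ⟨h1, h2⟩
    refine h.2 ⟨h1, ?_⟩
    have := mul_mem h2 (inv_mem (base_inFactor φ hc false))
    simpa [InFactor] using this

lemma alt_of_factor (hφ : ∀ i, Function.Injective (φ i)) {u y c : PushoutI φ} {i : Bool}
    (h : Alt φ u y) (hy : InFactor φ i y) (hc : InFactor φ i c)
    (hcb : c ∉ (PushoutI.base φ).range) : Alt φ u c := by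
  constructor
  · rintro ⟨h1, h2⟩
    cases i with
    | true => exact h.1 ⟨h1, hy⟩
    | false => exact hcb (mem_base_of_both φ hφ h2 hc)
  · rintro ⟨h1, h2⟩
    cases i with
    | false => exact h.2 ⟨h1, hy⟩
    | true => exact hcb (mem_base_of_both φ hφ hc h2)

lemma step_lemma (hφ : ∀ i, Function.Injective (φ i)) {L : List (PushoutI φ)}
    {g t : PushoutI φ} (hL : IsNormalDecomp φ g L) (ht : t ≠ 1)
    (hti : InFactor φ true t ∨ InFactor φ false t) :
    ∃ L' : List (PushoutI φ), ((L' = [] ∧ g * t = 1) ∨ IsNormalDecomp φ (g * t) L') ∧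
      ∀ k : ℕ, (L.take k).prod = g ∨
        ∃ (k' : ℕ) (a : PushoutI φ), a ∈ (PushoutI.base φ).range ∧
          (L.take k).prod = (L'.take k').prod * a := by
  rw [isNormalDecomp_iff] at hL
  obtain ⟨hne, hprod, hlet, hchain, hbase⟩ := hL
  rcases List.eq_nil_or_concat L with rfl | ⟨M, y, rfl⟩
  · exact absurd rfl hne
  simp only [List.concat_eq_append] at hprod hlet hchain hbase hne ⊢
  clear hne
  have hylet := hlet y (by simp)
  have hlenL : (M ++ [y]).length = M.length + 1 := by simp
  by_cases hshare : ∃ i, InFactor φ i y ∧ InFactor φ i t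
  · -- merge family
    obtain ⟨i, hyi, hti'⟩ := hshare
    set c := y * t with hc
    have hgt : g * t = M.prod * c := by
      rw [← hprod]; simp [hc, mul_assoc]
    by_cases hc1 : c = 1
    · -- full cancellation
      refine ⟨M, ?_, ?_⟩
      · rcases List.eq_nil_or_concat M with rfl | ⟨M', z, rfl⟩
        · left
          refine ⟨rfl, ?_⟩
          rw [hgt, hc1]; simp
        · right
          simp only [List.concat_eq_append] at *
          rw [isNormalDecomp_iff]
          refine ⟨by simp, by rw [hgt, hc1, mul_one], ?_, ?_, ?_⟩
          · intro x hx
            exact hlet x (List.mem_append_left _ hx)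
          · exact (List.isChain_append.mp hchain).1
          · intro _ x hx
            exact hbase (by simp) x (List.mem_append_left _ hx)
      · intro k
        by_cases hk : k ≤ M.length
        · right
          exact ⟨k, 1, one_mem _, by rw [List.take_append_of_le_length hk, mul_one]⟩
        · left
          rw [List.take_of_length_le (by rw [hlenL]; omega), hprod]
    · by_cases hcb : c ∈ (PushoutI.base φ).range
      · -- absorb into previous letter
        rcases List.eq_nil_or_concat M with rfl | ⟨M', z, rfl⟩
        · refine ⟨[c], Or.inr ?_, ?_⟩
          · rw [isNormalDecomp_iff]
            refine ⟨by simp, by simpa using hgt.symm, ?_, by simp, by simp⟩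
            intro x hx
            simp only [List.mem_singleton] at hx
            subst hx
            exact ⟨hc1, Or.inl (base_inFactor φ hcb true)⟩
          · intro k
            match k with
            | 0 => right; exact ⟨0, 1, one_mem _, by simp⟩
            | (k+1) =>
              left
              simp only [List.nil_append] at hprod ⊢
              simpa using hprod
        · simp only [List.concat_eq_append] at *
          have hlong : 1 < ((M' ++ [z]) ++ [y]).length := by simp
          have hzbase : z ∉ (PushoutI.base φ).range :=
            hbase hlong z (by simp)
          have hzlet := hlet z (by simp)
          have hzc1 : z * c ≠ 1 := by
            intro h
            exact hzbase (by
              have : z = c⁻¹ := eq_inv_of_mul_eq_one_left h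
              rw [this]; exact inv_mem hcb)
          have hzcbase : z * c ∉ (PushoutI.base φ).range := by
            intro h
            refine hzbase ?_
            have := mul_mem h (inv_mem hcb)
            simpa using this
          obtain ⟨j, hzj⟩ : ∃ j, InFactor φ j z := by
            rcases hzlet.2 with h | h
            exacts [⟨true, h⟩, ⟨false, h⟩]
          refine ⟨M' ++ [z * c], Or.inr ?_, ?_⟩
          · rw [isNormalDecomp_iff]
            refine ⟨by simp, ?_, ?_, ?_, ?_⟩
            · rw [hgt]
              simp [mul_assoc]
            · intro x hx
              rcases List.mem_append.mp hx with hx | hx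
              · exact hlet x (by simp [hx])
              · simp only [List.mem_singleton] at hx
                subst hx
                refine ⟨hzc1, ?_⟩
                cases j with
                | true => exact Or.inl (mul_mem hzj (base_inFactor φ hcb true))
                | false => exact Or.inr (mul_mem hzj (base_inFactor φ hcb false))
            · rw [List.isChain_append]
              refine ⟨(List.isChain_append.mp (List.isChain_append.mp hchain).1).1, by simp, ?_⟩
              intro u hu v hv
              simp only [List.head?_cons, Option.mem_some_iff] at hv
              subst hv
              have halt : Alt φ u z :=
                (List.isChain_append.mp (List.isChain_append.mp hchain).1).2.2 u hu z (by simp)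
              exact alt_mul_base φ halt hcb
            · intro _ x hx
              rcases List.mem_append.mp hx with hx | hx
              · exact hbase hlong x (by simp [hx])
              · simp only [List.mem_singleton] at hx
                subst hx
                exact hzcbase
          · intro k
            by_cases hk : k ≤ M'.length
            · right
              refine ⟨k, 1, one_mem _, ?_⟩
              rw [List.append_assoc, List.take_append_of_le_length hk,
                List.take_append_of_le_length hk, mul_one]
            · by_cases hk2 : k ≤ M'.length + 1
              · have hkk : k = M'.length + 1 := by omega
                right
                refine ⟨M'.length + 1, c⁻¹, inv_mem hcb, ?_⟩
                subst hkk
                rw [List.take_append_of_le_length (by simp),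
                  List.take_of_length_le (by simp),
                  List.take_of_length_le (by simp)]
                simp [mul_assoc]
              · left
                rw [List.take_of_length_le (by simp; omega), hprod]
      · -- proper merge
        have hci : InFactor φ i c := mul_mem hyi hti'
        refine ⟨M ++ [c], Or.inr ?_, ?_⟩
        · rw [isNormalDecomp_iff]
          refine ⟨by simp, by rw [hgt]; simp, ?_, ?_, ?_⟩
          · intro x hx
            rcases List.mem_append.mp hx with hx | hx
            · exact hlet x (by simp [hx])
            · simp only [List.mem_singleton] at hx
              subst hx
              refine ⟨hc1, ?_⟩
              cases i with
              | true => exact Or.inl hci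
              | false => exact Or.inr hci
          · rw [List.isChain_append]
            refine ⟨(List.isChain_append.mp hchain).1, by simp, ?_⟩
            intro u hu v hv
            simp only [List.head?_cons, Option.mem_some_iff] at hv
            subst hv
            have halt : Alt φ u y := by
              have := (List.isChain_append.mp hchain).2.2 u hu y (by simp)
              exact this
            exact alt_of_factor φ hφ halt hyi hci hcb
          · intro hlen x hx
            have hM : M ≠ [] := by
              intro h
              subst h
              simp at hlen
            rcases List.mem_append.mp hx with hx | hx
            · refine hbase ?_ x (by simp [hx])
              have : 0 < M.length := List.length_pos_iff.mpr hM
              rw [hlenL]; omega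
            · simp only [List.mem_singleton] at hx
              subst hx
              exact hcb
        · intro k
          by_cases hk : k ≤ M.length
          · right
            exact ⟨k, 1, one_mem _, by
              rw [List.take_append_of_le_length hk, List.take_append_of_le_length hk, mul_one]⟩
          · left
            rw [List.take_of_length_le (by rw [hlenL]; omega), hprod]
  · -- append
    push_neg at hshare
    obtain ⟨iy, hyiy⟩ : ∃ j, InFactor φ j y := by
      rcases hylet.2 with h | h
      exacts [⟨true, h⟩, ⟨false, h⟩]
    obtain ⟨it, htit⟩ : ∃ j, InFactor φ j t := by
      rcases hti with h | h
      exacts [⟨true, h⟩, ⟨false, h⟩]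
    have htbase : t ∉ (PushoutI.base φ).range := fun h =>
      hshare iy hyiy (base_inFactor φ h iy)
    have hybase : y ∉ (PushoutI.base φ).range := fun h =>
      hshare it (base_inFactor φ h it) htit
    refine ⟨(M ++ [y]) ++ [t], Or.inr ?_, ?_⟩
    · rw [isNormalDecomp_iff]
      refine ⟨by simp, by rw [← hprod]; simp [mul_assoc], ?_, ?_, ?_⟩
      · intro x hx
        rcases List.mem_append.mp hx with hx | hx
        · exact hlet x hx
        · simp only [List.mem_singleton] at hx
          subst hx
          exact ⟨ht, hti⟩
      · rw [List.isChain_append]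
        refine ⟨hchain, by simp, ?_⟩
        intro u hu v hv
        simp only [List.head?_cons, Option.mem_some_iff] at hv
        subst hv
        rw [List.getLast?_concat] at hu
        simp only [Option.mem_some_iff] at hu
        subst hu
        exact ⟨fun ⟨a, b⟩ => hshare true a b, fun ⟨a, b⟩ => hshare false a b⟩
      · intro _ x hx
        rcases List.mem_append.mp hx with hx | hx
        · rcases List.mem_append.mp hx with hx' | hx'
          · refine hbase ?_ x hx
            have : M ≠ [] := List.ne_nil_of_mem hx'
            have : 0 < M.length := List.length_pos_iff.mpr this
            rw [hlenL]; omega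
          · simp only [List.mem_singleton] at hx'
            subst hx'
            exact hybase
        · simp only [List.mem_singleton] at hx
          subst hx
          exact htbase
    · intro k
      by_cases hk : k ≤ M.length + 1
      · right
        refine ⟨k, 1, one_mem _, ?_⟩
        rw [List.take_append_of_le_length (l₁ := M ++ [y]) (by simp; omega), mul_one]
      · right
        refine ⟨M.length + 1, 1, one_mem _, ?_⟩
        rw [List.take_of_length_le (l := M ++ [y]) (by simp; omega),
          List.take_append_of_le_length (l₁ := M ++ [y]) (by simp),
          List.take_of_length_le (l := M ++ [y]) (by simp), mul_one]
lemma exists_rep (hφ : ∀ i, Function.Injective (φ i)) {x : PushoutI φ}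
    (hb : x ∉ (PushoutI.base φ).range) (hf : InFactor φ true x ∨ InFactor φ false x) :
    ∃ p : Σ i, Gf i, PushoutI.of (φ := φ) p.1 p.2 = x ∧ p.2 ∉ (φ p.1).range ∧
      ∀ j : Bool, InFactor φ j x → j = p.1 := by
  rcases hf with h | h
  · obtain ⟨g, rfl⟩ := h
    refine ⟨⟨true, g⟩, rfl, ?_, ?_⟩
    · rintro ⟨a, ha⟩
      refine hb ⟨a, ?_⟩
      rw [← PushoutI.of_apply_eq_base φ true a]
      exact congrArg _ ha
    · intro j hj
      cases j with
      | true => rfl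
      | false => exact absurd (mem_base_of_both φ hφ ⟨g, rfl⟩ hj) hb
  · obtain ⟨g, rfl⟩ := h
    refine ⟨⟨false, g⟩, rfl, ?_, ?_⟩
    · rintro ⟨a, ha⟩
      refine hb ⟨a, ?_⟩
      rw [← PushoutI.of_apply_eq_base φ false a]
      exact congrArg _ ha
    · intro j hj
      cases j with
      | false => rfl
      | true => exact absurd (mem_base_of_both φ hφ hj ⟨g, rfl⟩) hb

lemma prod_not_mem_base (hφ : ∀ i, Function.Injective (φ i)) :
    ∀ L : List (PushoutI φ), L ≠ [] →
    (∀ x ∈ L, x ∉ (PushoutI.base φ).range ∧ (InFactor φ true x ∨ InFactor φ false x)) →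
    List.IsChain (Alt φ) L → L.prod ∉ (PushoutI.base φ).range := by
  have key : ∀ L : List (PushoutI φ),
      (∀ x ∈ L, x ∉ (PushoutI.base φ).range ∧ (InFactor φ true x ∨ InFactor φ false x)) →
      List.IsChain (Alt φ) L →
      ∃ w : Monoid.CoprodI.Word Gf, PushoutI.ofCoprodI (φ := φ) w.prod = L.prod ∧
        PushoutI.Reduced φ w ∧
        List.Forall₂ (fun (p : Σ i, Gf i) (x : PushoutI φ) =>
          PushoutI.of (φ := φ) p.1 p.2 = x ∧ ∀ j : Bool, InFactor φ j x → j = p.1)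
          w.toList L := by
    intro L
    induction L with
    | nil =>
      intro _ _
      exact ⟨CoprodI.Word.empty, by simp [CoprodI.Word.empty, CoprodI.Word.prod], by
        intro g hg; simp [CoprodI.Word.empty] at hg, by simp [CoprodI.Word.empty]⟩
    | cons x L ih =>
      intro hmem hchain
      obtain ⟨w', hw'prod, hw'red, hw'f⟩ := ih (fun y hy => hmem y (List.mem_cons_of_mem _ hy))
        hchain.tail
      obtain ⟨p, hp1, hp2, hp3⟩ := exists_rep φ hφ (hmem x (List.mem_cons_self)).1
        (hmem x (List.mem_cons_self)).2
      have hne1 : p.2 ≠ 1 := by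
        intro h
        rw [h] at hp2
        exact hp2 (one_mem _)
      have hchainw : (p :: w'.toList).IsChain (fun l l' => Sigma.fst l ≠ Sigma.fst l') := by
        rw [List.isChain_cons]
        refine ⟨?_, w'.chain_ne⟩
        intro q hq
        cases hL : w'.toList with
        | nil => rw [hL] at hq; simp at hq
        | cons q0 rest =>
          rw [hL] at hq
          simp at hq
          subst hq
          rw [hL] at hw'f
          cases L with
          | nil => exact absurd hw'f (by simp)
          | cons y L' =>
            cases hw'f with
            | cons h1 h2 =>
            have hxy : Alt φ x y := (List.isChain_cons_cons.mp hchain).1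
            intro heq
            have hxj : InFactor φ p.1 x := ⟨p.2, hp1⟩
            have hyj : InFactor φ p.1 y := heq ▸ ⟨q0.2, h1.1⟩
            cases hb : p.1 with
            | true => exact hxy.1 ⟨hb ▸ hxj, hb ▸ hyj⟩
            | false => exact hxy.2 ⟨hb ▸ hxj, hb ▸ hyj⟩
      refine ⟨⟨p :: w'.toList, ?_, hchainw⟩, ?_, ?_, ?_⟩
      · intro l hl
        rcases List.mem_cons.mp hl with rfl | hl
        · exact hne1
        · exact w'.ne_one l hl
      · show PushoutI.ofCoprodI (CoprodI.Word.prod ⟨p :: w'.toList, _, _⟩) = (x :: L).prod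
        rw [CoprodI.Word.prod]
        simp only [List.map_cons, List.prod_cons, map_mul]
        rw [PushoutI.ofCoprodI_of, hp1]
        congr 1
      · intro g hg
        rcases List.mem_cons.mp hg with rfl | hg
        · exact hp2
        · exact hw'red g hg
      · exact List.Forall₂.cons ⟨hp1, hp3⟩ hw'f
  intro L hne hmem hchain hbase
  obtain ⟨w, hwprod, hwred, hwf⟩ := key L hmem hchain
  have : w = CoprodI.Word.empty := hwred.eq_empty_of_mem_range hφ (by rw [hwprod]; exact hbase)
  have hlen := hwf.length_eq
  rw [this] at hlen
  simp [CoprodI.Word.empty] at hlen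
  exact hne (List.length_eq_zero_iff.mp hlen.symm)


lemma no_decomp_one (hφ : ∀ i, Function.Injective (φ i)) {L : List (PushoutI φ)} :
    ¬ IsNormalDecomp φ 1 L := by
  rw [isNormalDecomp_iff]
  rintro ⟨hne, hprod, hlet, hchain, hbase⟩
  by_cases hlen : 1 < L.length
  · refine prod_not_mem_base φ hφ L hne
      (fun x hx => ⟨hbase hlen x hx, (hlet x hx).2⟩) hchain ?_
    rw [hprod]
    exact one_mem _
  · have h1 : L.length = 1 := by
      have : 0 < L.length := List.length_pos_iff.mpr hne
      omega
    obtain ⟨x, rfl⟩ := List.length_eq_one_iff.mp h1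
    simp only [List.prod_cons, List.prod_nil, mul_one] at hprod
    exact (hlet x (by simp)).1 hprod

lemma word_prefix (hφ : ∀ i, Function.Injective (φ i)) :
    ∀ (W : List (PushoutI φ)),
      (∀ x ∈ W, x ≠ 1 ∧ (InFactor φ true x ∨ InFactor φ false x)) →
      ∀ L : List (PushoutI φ), IsNormalDecomp φ W.prod L →
      ∀ k : ℕ, ∃ (j : ℕ) (a : PushoutI φ), j ≤ W.length ∧ a ∈ (PushoutI.base φ).range ∧
        (L.take k).prod = (W.take j).prod * a := by
  intro W
  induction W using List.reverseRecOn with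
  | nil =>
    intro _ L hL
    simp only [List.prod_nil] at hL
    exact absurd hL (no_decomp_one φ hφ)
  | append_singleton W x ih =>
    intro hlet L hL k
    have hxlet := hlet x (by simp)
    have hstep := step_lemma φ hφ hL (inv_ne_one.mpr hxlet.1)
      (by rcases hxlet.2 with h | h
          exacts [Or.inl (inv_mem h), Or.inr (inv_mem h)])
    obtain ⟨L₂, hL₂, hpre⟩ := hstep
    have hWx : (W ++ [x]).prod * x⁻¹ = W.prod := by
      simp [List.prod_append]
    rcases hpre k with hk | ⟨k', a, ha, hk⟩
    · refine ⟨(W ++ [x]).length, 1, le_refl _, one_mem _, ?_⟩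
      rw [List.take_length, mul_one, hk]
    · rcases hL₂ with ⟨rfl, h1⟩ | hnd
      · rw [hWx] at h1
        refine ⟨0, a, by simp, ha, ?_⟩
        simpa using hk
      · rw [hWx] at hnd
        obtain ⟨j, a₂, hj, ha₂, hj2⟩ := ih (fun z hz => hlet z (by simp [hz])) L₂ hnd k'
        refine ⟨j, a₂ * a, by simp; omega, mul_mem ha₂ ha, ?_⟩
        rw [hk, hj2, List.take_append_of_le_length hj, mul_assoc]


noncomputable def amalgamWordLength' (g : PushoutI φ) : ℕ :=
  sInf {n : ℕ | ∃ L : List (PushoutI φ), L.length = n ∧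
    (∀ x ∈ L, x ≠ 1 ∧ (InFactor φ true x ∨ InFactor φ false x)) ∧ L.prod = g}

lemma exists_word (g : PushoutI φ) :
    ∃ L : List (PushoutI φ),
      (∀ x ∈ L, x ≠ 1 ∧ (InFactor φ true x ∨ InFactor φ false x)) ∧ L.prod = g := by
  induction g using PushoutI.induction_on with
  | of i x =>
    by_cases h : PushoutI.of (φ := φ) i x = 1
    · exact ⟨[], by simp, by simp [h]⟩
    · refine ⟨[PushoutI.of (φ := φ) i x], ?_, by simp⟩
      intro z hz
      simp only [List.mem_singleton] at hz
      subst hz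
      refine ⟨h, ?_⟩
      cases i with
      | true => exact Or.inl ⟨x, rfl⟩
      | false => exact Or.inr ⟨x, rfl⟩
  | base a =>
    by_cases h : PushoutI.base φ a = 1
    · exact ⟨[], by simp, by simp [h]⟩
    · refine ⟨[PushoutI.base φ a], ?_, by simp⟩
      intro z hz
      simp only [List.mem_singleton] at hz
      subst hz
      exact ⟨h, Or.inl ⟨φ true a, by rw [PushoutI.of_apply_eq_base]⟩⟩
  | mul x y ihx ihy =>
    obtain ⟨L1, h1, hp1⟩ := ihx
    obtain ⟨L2, h2, hp2⟩ := ihy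
    refine ⟨L1 ++ L2, ?_, by rw [List.prod_append, hp1, hp2]⟩
    intro z hz
    rcases List.mem_append.mp hz with h | h
    exacts [h1 z h, h2 z h]

lemma exists_geodesic (g : PushoutI φ) :
    ∃ L : List (PushoutI φ), L.length = amalgamWordLength' φ g ∧
      (∀ x ∈ L, x ≠ 1 ∧ (InFactor φ true x ∨ InFactor φ false x)) ∧ L.prod = g := by
  have hne : {n : ℕ | ∃ L : List (PushoutI φ), L.length = n ∧
      (∀ x ∈ L, x ≠ 1 ∧ (InFactor φ true x ∨ InFactor φ false x)) ∧ L.prod = g}.Nonempty := by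
    obtain ⟨L, hL, hp⟩ := exists_word φ g
    exact ⟨L.length, L, rfl, hL, hp⟩
  have := Nat.sInf_mem hne
  exact this

lemma one_le_length_of_ne_one {g : PushoutI φ} (hg : g ≠ 1) : 1 ≤ amalgamWordLength' φ g := by
  by_contra h
  have h0 : amalgamWordLength' φ g = 0 := by omega
  obtain ⟨L, hlen, _, hprod⟩ := exists_geodesic φ g
  rw [h0] at hlen
  rw [List.length_eq_zero_iff.mp hlen] at hprod
  exact hg (by rw [← hprod]; rfl)

lemma exists_list_of_mem_closure' {S : Set (PushoutI φ)} {h : PushoutI φ}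
    (hh : h ∈ Subgroup.closure S) :
    ∃ l : List (PushoutI φ), (∀ x ∈ l, x ∈ S ∨ x⁻¹ ∈ S) ∧ l.prod = h := by
  induction hh using Subgroup.closure_induction with
  | mem x hx => exact ⟨[x], by simp [hx], by simp⟩
  | one => exact ⟨[], by simp, by simp⟩
  | mul x y _ _ ihx ihy =>
    obtain ⟨l1, h1, hp1⟩ := ihx
    obtain ⟨l2, h2, hp2⟩ := ihy
    refine ⟨l1 ++ l2, ?_, by rw [List.prod_append, hp1, hp2]⟩
    intro z hz
    rcases List.mem_append.mp hz with h | h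
    exacts [h1 z h, h2 z h]
  | inv x _ ihx =>
    obtain ⟨l, hl, hp⟩ := ihx
    refine ⟨(l.map fun z => z⁻¹).reverse, ?_, by rw [← List.prod_inv_reverse, hp]⟩
    intro z hz
    simp only [List.mem_reverse, List.mem_map] at hz
    obtain ⟨w, hw, rfl⟩ := hz
    rcases hl w hw with h | h
    · exact Or.inr (by simpa using h)
    · exact Or.inl h

lemma join_take (H : Subgroup (PushoutI φ)) :
    ∀ (ws : List (List (PushoutI φ))), (∀ w ∈ ws, w.prod ∈ H) → ∀ j : ℕ,
      ∃ (h q : PushoutI φ), h ∈ H ∧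
        (q = 1 ∨ ∃ V ∈ ws, ∃ k, q = (V.take k).prod) ∧
        (ws.flatten.take j).prod = h * q := by
  intro ws
  induction ws with
  | nil =>
    intro _ j
    exact ⟨1, 1, one_mem _, Or.inl rfl, by simp⟩
  | cons w ws ih =>
    intro hmem j
    by_cases hj : j ≤ w.length
    · refine ⟨1, (w.take j).prod, one_mem _, Or.inr ⟨w, by simp, j, rfl⟩, ?_⟩
      rw [List.flatten_cons, List.take_append_of_le_length hj, one_mul]
    · obtain ⟨h, q, hH, hq, hpr⟩ := ih (fun v hv => hmem v (by simp [hv])) (j - w.length)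
      refine ⟨w.prod * h, q, mul_mem (hmem w (by simp)) hH, ?_, ?_⟩
      · rcases hq with h | ⟨V, hV, k, hk⟩
        · exact Or.inl h
        · exact Or.inr ⟨V, by simp [hV], k, hk⟩
      · rw [List.flatten_cons, List.take_append,
          List.take_of_length_le (by omega), List.prod_append, hpr, mul_assoc]

end EssentialCosets

/-- The word length of `g ∈ G = G₁ *_A G₂` with respect to the generating set
`(ι₁(G₁) ∪ ι₂(G₂)) \ {1}`. -/
noncomputable def amalgamWordLength {A : Type} [Group A] {Gf : Bool → Type}
    [∀ i, Group (Gf i)] (φ : ∀ i : Bool, A →* Gf i) (g : PushoutI φ) : ℕ :=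
  sInf {n : ℕ | ∃ L : List (PushoutI φ), L.length = n ∧
    (∀ x ∈ L, x ≠ 1 ∧ (InFactor φ true x ∨ InFactor φ false x)) ∧ L.prod = g}


lemma amalgamWordLength_eq {A : Type} [Group A] {Gf : Bool → Type}
    [∀ i, Group (Gf i)] (φ : ∀ i : Bool, A →* Gf i) (g : PushoutI φ) :
    amalgamWordLength φ g = amalgamWordLength' φ g := rfl

/-- There is a constant `C > 0`, depending only on the amalgam `G = G₁ *_A G₂` of finite
groups, such that for every finite subset `S` of `G` the number of essential right cosets
of the subgroup `H = ⟨S⟩` is at most `C·(1 + Σ_{s ∈ S} ℓ(s))`, where `ℓ(s)` is the word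
length of `s` with respect to the generating set `(ι₁(G₁) ∪ ι₂(G₂)) \ {1}` of `G`. -/
theorem essentialCosets_card_linear_bound
    (A : Type) [Group A] (Gf : Bool → Type) [∀ i, Group (Gf i)] [∀ i, Finite (Gf i)]
    (φ : ∀ i : Bool, A →* Gf i) (hφ : ∀ i, Function.Injective (φ i)) :
    ∃ C : ℕ, 0 < C ∧ ∀ S : Finset (PushoutI φ),
      (essentialCosets φ (Subgroup.closure (S : Set (PushoutI φ)))).ncard ≤
        C * (1 + ∑ s ∈ S, amalgamWordLength φ s) := by
  classical
  set G := PushoutI φ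
  -- the finite set of factor elements
  have hUfin : (Set.range (PushoutI.of (φ := φ) true) ∪
      Set.range (PushoutI.of (φ := φ) false)).Finite :=
    (Set.finite_range _).union (Set.finite_range _)
  set U : Finset G := hUfin.toFinset with hU
  have h1U : (1 : G) ∈ U := by
    rw [hU, Set.Finite.mem_toFinset]
    exact Or.inl ⟨1, map_one _⟩
  have hUpos : 0 < U.card := Finset.card_pos.mpr ⟨1, h1U⟩
  refine ⟨4 * U.card, by omega, ?_⟩
  intro S
  set H : Subgroup G := Subgroup.closure (S : Set G) with hH
  set ℓ : G → ℕ := amalgamWordLength φ with hℓ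
  have hgeo : ∀ g : G, ∃ L : List G, L.length = ℓ g ∧
      (∀ x ∈ L, x ≠ 1 ∧ (InFactor φ true x ∨ InFactor φ false x)) ∧ L.prod = g := by
    intro g
    rw [hℓ, amalgamWordLength_eq]
    exact exists_geodesic φ g
  choose geo hgeolen hgeolet hgeoprod using hgeo
  set invw : List G → List G := fun l => (l.map fun z => z⁻¹).reverse with hinvw
  have hinvwlen : ∀ l : List G, (invw l).length = l.length := by
    intro l; simp [hinvw]
  have hinvwprod : ∀ l : List G, (invw l).prod = l.prod⁻¹ := by
    intro l; rw [hinvw]; exact (List.prod_inv_reverse l).symm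
  have hinvwlet : ∀ l : List G, (∀ x ∈ l, x ≠ 1 ∧ (InFactor φ true x ∨ InFactor φ false x)) →
      ∀ x ∈ invw l, x ≠ 1 ∧ (InFactor φ true x ∨ InFactor φ false x) := by
    intro l hl x hx
    rw [hinvw] at hx
    simp only [List.mem_reverse, List.mem_map] at hx
    obtain ⟨z, hz, rfl⟩ := hx
    obtain ⟨hz1, hz2⟩ := hl z hz
    refine ⟨inv_ne_one.mpr hz1, ?_⟩
    rcases hz2 with h | h
    exacts [Or.inl (inv_mem h), Or.inr (inv_mem h)]
  set prefF : List G → Finset G :=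
    fun V => (Finset.range (V.length + 1)).image fun k => (V.take k).prod with hprefF
  have hpref : ∀ (V : List G) (k : ℕ), (V.take k).prod ∈ prefF V := by
    intro V k
    rw [hprefF]
    simp only [Finset.mem_image, Finset.mem_range]
    refine ⟨min k V.length, by omega, ?_⟩
    rcases le_or_gt k V.length with h | h
    · rw [min_eq_left h]
    · rw [min_eq_right h.le, List.take_of_length_le h.le, List.take_length]
  have hprefcard : ∀ V : List G, (prefF V).card ≤ V.length + 1 := by
    intro V
    rw [hprefF]
    exact (Finset.card_image_le).trans (by rw [Finset.card_range])
  set T' : Finset G :=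
    insert 1 (S.biUnion fun s => prefF (geo s) ∪ prefF (invw (geo s))) with hT'
  -- the covering map
  set F : G × G → Set G := fun p => {g : G | g * (p.1 * p.2)⁻¹ ∈ H} with hF
  have hsub : essentialCosets φ H ⊆ F '' ↑(T' ×ˢ U) := by
    rintro X ⟨c, hcess, rfl⟩
    rcases hcess with hc | ⟨L, m, s, hnd, hLH, hm, ⟨i, x, hxm, hxi, hsi⟩, hcH⟩
    · refine ⟨(1, 1), ?_, ?_⟩
      · exact Finset.mem_coe.mpr (Finset.mem_product.mpr
          ⟨Finset.mem_insert_self _ _, h1U⟩)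
      · rw [hF]
        ext g
        simp only [Set.mem_setOf_eq, mul_one, inv_one]
        exact (mul_mem_cancel_right (inv_mem hc)).symm
    · obtain ⟨l, hl, hlprod⟩ := exists_list_of_mem_closure' φ hLH
      set wd : G → List G := fun z => if z ∈ S then geo z else invw (geo z⁻¹) with hwd
      set ws : List (List G) := l.map wd with hws
      have hwsH : ∀ w ∈ ws, w.prod ∈ H := by
        intro w hw
        rw [hws] at hw
        simp only [List.mem_map] at hw
        obtain ⟨z, hz, rfl⟩ := hw
        rw [hwd]
        by_cases hzS : z ∈ S
        · simp only [hzS, if_true]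
          rw [hgeoprod]
          exact Subgroup.subset_closure hzS
        · simp only [hzS, if_false]
          rw [hinvwprod, hgeoprod]
          have hz' : z⁻¹ ∈ S := by
            rcases hl z hz with h | h
            · exact absurd h hzS
            · exact h
          have : (z⁻¹ : G) ∈ H := Subgroup.subset_closure hz'
          exact inv_mem this
      set W : List G := ws.flatten with hW
      have hWlet : ∀ x ∈ W, x ≠ 1 ∧ (InFactor φ true x ∨ InFactor φ false x) := by
        intro x hx
        rw [hW] at hx
        obtain ⟨w, hw, hxw⟩ := List.mem_flatten.mp hx
        rw [hws] at hw
        simp only [List.mem_map] at hw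
        obtain ⟨z, hz, rfl⟩ := hw
        rw [hwd] at hxw
        by_cases hzS : z ∈ S
        · simp only [hzS, if_true] at hxw
          exact hgeolet z x hxw
        · simp only [hzS, if_false] at hxw
          exact hinvwlet (geo z⁻¹) (hgeolet z⁻¹) x hxw
      have hWprod : W.prod = L.prod := by
        rw [hW, List.prod_flatten, hws, List.map_map, ← hlprod]
        congr 1
        have hmc : List.map (List.prod ∘ wd) l = List.map id l := by
          refine List.map_congr_left ?_
          intro z hz
          simp only [Function.comp_apply, id_eq]
          rw [hwd]
          by_cases hzS : z ∈ S
          · simp only [hzS, if_true]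
            exact hgeoprod z
          · simp only [hzS, if_false]
            rw [hinvwprod, hgeoprod, inv_inv]
        rw [hmc, List.map_id]
      have hnd' : IsNormalDecomp φ W.prod L := by rw [hWprod]; exact hnd
      obtain ⟨j, a, hj, ha, hLa⟩ := word_prefix φ hφ W hWlet L hnd' m
      obtain ⟨h', q, hh', hq, hWj⟩ := join_take φ H ws hwsH j
      have hqT : q ∈ T' := by
        rcases hq with rfl | ⟨V, hV, k, rfl⟩
        · exact Finset.mem_insert_self _ _
        · rw [hws] at hV
          simp only [List.mem_map] at hV
          obtain ⟨z, hz, rfl⟩ := hV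
          rw [hT']
          refine Finset.mem_insert_of_mem (Finset.mem_biUnion.mpr ?_)
          rw [hwd]
          by_cases hzS : z ∈ S
          · simp only [hzS, if_true]
            exact ⟨z, hzS, Finset.mem_union_left _ (hpref _ k)⟩
          · simp only [hzS, if_false]
            have hz' : z⁻¹ ∈ S := by
              rcases hl z hz with h | h
              · exact absurd h hzS
              · exact h
            exact ⟨z⁻¹, hz', Finset.mem_union_right _ (hpref _ k)⟩
      set t : G := a * s with hts
      have htU : t ∈ U := by
        rw [hU, Set.Finite.mem_toFinset]
        have hti : t ∈ (PushoutI.of (φ := φ) i).range :=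
          mul_mem (base_inFactor φ ha i) hsi
        obtain ⟨u, hu⟩ := hti
        cases i with
        | true => exact Or.inl ⟨u, hu⟩
        | false => exact Or.inr ⟨u, hu⟩
      have hps : (L.take m).prod * s = h' * (q * t) := by
        rw [hLa, hWj, hts]
        group
      have hqc : c * (q * t)⁻¹ ∈ H := by
        have h3 := mul_mem hcH hh'
        have heq : c * ((L.take m).prod * s)⁻¹ * h' = c * (q * t)⁻¹ := by
          rw [hps]
          group
        rwa [heq] at h3
      refine ⟨(q, t), ?_, ?_⟩
      · exact Finset.mem_coe.mpr (Finset.mem_product.mpr ⟨hqT, htU⟩)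
      · rw [hF]
        ext g
        simp only [Set.mem_setOf_eq]
        have hmem : (q * t) * c⁻¹ ∈ H := by
          have := inv_mem hqc
          simpa [mul_inv_rev] using this
        constructor
        · intro hg
          have := mul_mem hg hmem
          have heq : g * (q * t)⁻¹ * ((q * t) * c⁻¹) = g * c⁻¹ := by group
          rwa [heq] at this
        · intro hg
          have := mul_mem hg (inv_mem hmem)
          have heq : g * c⁻¹ * ((q * t) * c⁻¹)⁻¹ = g * (q * t)⁻¹ := by group
          rwa [heq] at this
  -- cardinality estimates
  have hfin : (F '' ↑(T' ×ˢ U)).Finite := (T' ×ˢ U).finite_toSet.image F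
  have hcard1 : (essentialCosets φ H).ncard ≤ T'.card * U.card := by
    calc (essentialCosets φ H).ncard ≤ (F '' ↑(T' ×ˢ U)).ncard :=
          Set.ncard_le_ncard hsub hfin
      _ ≤ (↑(T' ×ˢ U) : Set (G × G)).ncard := Set.ncard_image_le (T' ×ˢ U).finite_toSet
      _ = (T' ×ˢ U).card := Set.ncard_coe_finset _
      _ = T'.card * U.card := Finset.card_product _ _
  have hScard : S.card ≤ 1 + ∑ s ∈ S, ℓ s := by
    set S₂ : Finset G := S.filter (fun z => ¬ z = (1 : G)) with hS₂
    have hsub2 : S ⊆ insert (1 : G) S₂ := by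
      intro z hz
      by_cases hz1 : z = 1
      · subst hz1; exact Finset.mem_insert_self _ _
      · exact Finset.mem_insert_of_mem (Finset.mem_filter.mpr ⟨hz, hz1⟩)
    have h2 : S₂.card ≤ ∑ s ∈ S, ℓ s := by
      rw [Finset.card_eq_sum_ones]
      calc ∑ _s ∈ S₂, 1 ≤ ∑ s ∈ S₂, ℓ s := by
            refine Finset.sum_le_sum ?_
            intro z hz
            rw [hS₂, Finset.mem_filter] at hz
            rw [hℓ, amalgamWordLength_eq]
            exact one_le_length_of_ne_one φ hz.2
        _ ≤ ∑ s ∈ S, ℓ s := Finset.sum_le_sum_of_subset (Finset.filter_subset _ _)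
    have := (Finset.card_le_card hsub2).trans (Finset.card_insert_le _ _)
    omega
  have hT'card : T'.card ≤ 4 * (1 + ∑ s ∈ S, ℓ s) := by
    have hb : (S.biUnion fun s => prefF (geo s) ∪ prefF (invw (geo s))).card ≤
        ∑ s ∈ S, ((ℓ s + 1) + (ℓ s + 1)) := by
      refine (Finset.card_biUnion_le).trans (Finset.sum_le_sum ?_)
      intro s _
      refine (Finset.card_union_le _ _).trans ?_
      have e1 : (prefF (geo s)).card ≤ ℓ s + 1 := by
        have := hprefcard (geo s)
        rwa [hgeolen] at this
      have e2 : (prefF (invw (geo s))).card ≤ ℓ s + 1 := by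
        have := hprefcard (invw (geo s))
        rwa [hinvwlen, hgeolen] at this
      omega
    have hsum : ∑ s ∈ S, ((ℓ s + 1) + (ℓ s + 1)) ≤ 2 * (∑ s ∈ S, ℓ s) + 2 * S.card := by
      have hcg : ∀ s ∈ S, (ℓ s + 1) + (ℓ s + 1) = 2 * ℓ s + 2 := by intro s _; ring
      rw [Finset.sum_congr rfl hcg, Finset.sum_add_distrib, ← Finset.mul_sum,
        Finset.sum_const, smul_eq_mul]
      omega
    have hins : T'.card ≤ (S.biUnion fun s => prefF (geo s) ∪ prefF (invw (geo s))).card + 1 := by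
      rw [hT']
      exact Finset.card_insert_le _ _
    omega
  calc (essentialCosets φ H).ncard ≤ T'.card * U.card := hcard1
    _ ≤ (4 * (1 + ∑ s ∈ S, ℓ s)) * U.card := Nat.mul_le_mul_right _ hT'card
    _ = 4 * U.card * (1 + ∑ s ∈ S, ℓ s) := by ring
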